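/- For n ≥ 0, the Narayana polynomial satisfies N_{n+1}(x) = \sum_{k=0}^{n} binom(n,k) M_k(x;x), where M_k(u;v) = \sum_{j=0}^{\lfloor k/2 \rfloor} binom(k,2j) C_j u^{j+1} v^{k-2j}. -/

import Mathlib

open Finset

/-- The two-variable Motzkin polynomial M_n(u;v). -/
def motzkinPoly (n : ℕ) (u v : ℚ) : ℚ :=
  ∑ k ∈ Finset.range (n / 2 + 1),
    (n.choose (2 * k) * catalan k : ℚ) * u ^ (k + 1) * v ^ (n - 2 * k)

lemma cmc (n a b : ℕ) : n.choose (a+b) * (a+b).choose a = n.choose a * (n-a).choose b := by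
  by_cases h : a + b ≤ n
  · have := Nat.choose_mul (n := n) (Nat.le_add_right a b)
    rwa [Nat.add_sub_cancel_left] at this
  · push_neg at h
    rw [Nat.choose_eq_zero_of_lt h]
    by_cases ha : a ≤ n
    · rw [Nat.choose_eq_zero_of_lt (by omega : n - a < b)]; simp
    · rw [Nat.choose_eq_zero_of_lt (by omega : n < a)]; simp

lemma vdm (p q k : ℕ) : (p + q).choose k = ∑ j ∈ range (k+1), p.choose j * q.choose (k - j) := by
  rw [Nat.add_choose_eq, Finset.Nat.sum_antidiagonal_eq_sum_range_succ_mk]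

lemma catsplit (j : ℕ) : catalan j + (2*j).choose (j+1) = (2*j).choose j := by
  have h1 : (j+1) * catalan j = (2*j).choose j := by
    rw [succ_mul_catalan_eq_centralBinom, Nat.centralBinom_eq_two_mul_choose]
  have h2 : (2*j).choose (j+1) * (j+1) = (2*j).choose j * j := by
    rw [Nat.choose_succ_right_eq]; congr 1; omega
  have : (j+1) * (catalan j + (2*j).choose (j+1)) = (j+1) * ((2*j).choose j) := by
    rw [Nat.mul_add, h1]
    nlinarith [h2]
  exact Nat.eq_of_mul_eq_mul_left (by omega) this

lemma sumA (n m : ℕ) (h : m ≤ n) :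
    ∑ j ∈ range (m+1), n.choose (2*j) * (2*j).choose j * (n - 2*j).choose (m - j)
      = n.choose m * n.choose m := by
  have step : ∀ j ∈ range (m+1),
      n.choose (2*j) * (2*j).choose j * (n - 2*j).choose (m - j)
        = n.choose m * ((n-m).choose j * m.choose j) := by
    intro j hj
    rw [mem_range] at hj
    have hjm : j ≤ m := by omega
    have t1 : n.choose (2*j) * (2*j).choose j = n.choose j * (n-j).choose j := by
      have := cmc n j j; rwa [show j + j = 2*j by ring] at this
    have t2 : (n-j).choose j * (n - 2*j).choose (m - j) = (n-j).choose m * m.choose j := by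
      have := cmc (n-j) j (m-j)
      rw [show j + (m - j) = m by omega, show n - j - j = n - 2*j by omega] at this
      omega
    have t3 : n.choose j * (n-j).choose m = n.choose m * (n-m).choose j := by
      have a1 := cmc n j m
      have a2 := cmc n m j
      rw [show m + j = j + m by ring] at a2
      have hsym : (j+m).choose j = (j+m).choose m := by
        rw [← Nat.choose_symm (by omega : j ≤ j + m), show j + m - j = m by omega]
      rw [hsym] at a1
      omega
    calc n.choose (2*j) * (2*j).choose j * (n - 2*j).choose (m - j)
        = n.choose j * ((n-j).choose j * (n - 2*j).choose (m - j)) := by rw [t1]; ring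
      _ = n.choose j * ((n-j).choose m * m.choose j) := by rw [t2]
      _ = n.choose j * (n-j).choose m * m.choose j := by ring
      _ = n.choose m * ((n-m).choose j * m.choose j) := by rw [t3]; ring
  rw [Finset.sum_congr rfl step, ← Finset.mul_sum]
  congr 1
  have : ∀ j ∈ range (m+1), (n-m).choose j * m.choose j = (n-m).choose j * m.choose (m - j) := by
    intro j hj; rw [mem_range] at hj
    rw [← Nat.choose_symm (by omega : j ≤ m)]
  rw [Finset.sum_congr rfl this, ← vdm, Nat.sub_add_cancel h]

lemma sumB (n s : ℕ) (h : s + 1 ≤ n) :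
    ∑ j ∈ range (s+2), n.choose (2*j) * (2*j).choose (j+1) * (n - 2*j).choose (s + 1 - j)
      = n.choose (s+2) * n.choose s := by
  rw [Finset.sum_range_succ']
  simp only [Nat.mul_zero, Nat.choose_zero_right, Nat.choose_one_right]
  have step : ∀ t ∈ range (s+1),
      n.choose (2*(t+1)) * (2*(t+1)).choose (t+1+1) * (n - 2*(t+1)).choose (s + 1 - (t+1))
        = n.choose s * ((n-s).choose (t+2) * s.choose (s - t)) := by
    intro t ht
    rw [mem_range] at ht
    have t1 : n.choose (2*(t+1)) * (2*(t+1)).choose (t+2) = n.choose (t+2) * (n-(t+2)).choose t := by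
      have := cmc n (t+2) t; rwa [show t + 2 + t = 2*(t+1) by ring] at this
    have t2 : (n-(t+2)).choose t * (n - 2*(t+1)).choose (s - t) = (n-(t+2)).choose s * s.choose t := by
      have := cmc (n-(t+2)) t (s-t)
      rw [show t + (s - t) = s by omega, show n - (t+2) - t = n - 2*(t+1) by omega] at this
      omega
    have t3 : n.choose (t+2) * (n-(t+2)).choose s = n.choose s * (n-s).choose (t+2) := by
      have a1 := cmc n (t+2) s
      have a2 := cmc n s (t+2)
      rw [show s + (t+2) = (t+2) + s by ring] at a2
      have hsym : ((t+2)+s).choose (t+2) = ((t+2)+s).choose s := by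
        rw [← Nat.choose_symm (by omega : t+2 ≤ t+2+s), show t+2+s - (t+2) = s by omega]
      rw [hsym] at a1
      omega
    have hst : s.choose t = s.choose (s - t) := by
      rw [← Nat.choose_symm (by omega : t ≤ s)]
    calc n.choose (2*(t+1)) * (2*(t+1)).choose (t+1+1) * (n - 2*(t+1)).choose (s + 1 - (t+1))
        = n.choose (2*(t+1)) * (2*(t+1)).choose (t+2) * (n - 2*(t+1)).choose (s - t) := by
          congr 2; omega
      _ = n.choose (t+2) * ((n-(t+2)).choose t * (n - 2*(t+1)).choose (s - t)) := by rw [t1]; ring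
      _ = n.choose (t+2) * ((n-(t+2)).choose s * s.choose t) := by rw [t2]
      _ = n.choose (t+2) * (n-(t+2)).choose s * s.choose t := by ring
      _ = n.choose s * ((n-s).choose (t+2) * s.choose (s - t)) := by rw [t3, ← hst]; ring
  rw [Finset.sum_congr rfl step, ← Finset.mul_sum]
  have hv : n.choose (s+2) = ∑ a ∈ range (s+3), (n-s).choose a * s.choose (s + 2 - a) := by
    have := vdm (n-s) s (s+2)
    rwa [Nat.sub_add_cancel (by omega : s ≤ n)] at this
  have hv2 : n.choose (s+2) = ∑ t ∈ range (s+1), (n-s).choose (t+2) * s.choose (s - t) := by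
    rw [hv, Finset.sum_range_succ', Finset.sum_range_succ']
    rw [Nat.choose_eq_zero_of_lt (by omega : s < s + 2 - 0),
        Nat.choose_eq_zero_of_lt (by omega : s < s + 2 - (0+1))]
    simp only [Nat.mul_zero, Nat.zero_mul, Nat.add_zero]
    apply Finset.sum_congr rfl
    intro t ht; congr 2; omega
  rw [hv2, Finset.sum_mul, Finset.mul_sum]
  simp [Nat.choose_eq_zero_of_lt, mul_comm, mul_assoc, mul_left_comm]

lemma final_q (s c : ℕ) :
    ((s+c+2).choose (s+2) * (s+c+2).choose (s+1) : ℚ)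
      = (s+c+2) * ((((s+c+1).choose (s+1) : ℚ))^2
          - ((s+c+1).choose (s+2) : ℚ) * ((s+c+1).choose s : ℚ)) := by
  have e1 : (s+c+1).choose (s+2) * (s+2) = (s+c+1).choose (s+1) * c := by
    have := Nat.choose_succ_right_eq (s+c+1) (s+1)
    rwa [show s+c+1 - (s+1) = c by omega] at this
  have e2 : (s+c+1).choose (s+1) * (s+1) = (s+c+1).choose s * (c+1) := by
    have := Nat.choose_succ_right_eq (s+c+1) s
    rwa [show s+c+1 - s = c+1 by omega] at this
  have e3 : (s+c+2).choose (s+2) * (s+2) = (s+c+2) * (s+c+1).choose (s+1) := by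
    have := (Nat.add_one_mul_choose_eq (s+c+1) (s+1)).symm
    simpa [Nat.succ_eq_add_one, show s+c+1+1 = s+c+2 by ring] using this
  have e4 : (s+c+2).choose (s+1) * (s+1) = (s+c+2) * (s+c+1).choose s := by
    have := (Nat.add_one_mul_choose_eq (s+c+1) s).symm
    simpa [Nat.succ_eq_add_one, show s+c+1+1 = s+c+2 by ring] using this
  have q1 : ((s+c+1).choose (s+2) : ℚ) * (s+2) = ((s+c+1).choose (s+1) : ℚ) * c := by
    exact_mod_cast congrArg (Nat.cast : ℕ → ℚ) e1
  have q2 : ((s+c+1).choose (s+1) : ℚ) * (s+1) = ((s+c+1).choose s : ℚ) * (c+1) := by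
    exact_mod_cast congrArg (Nat.cast : ℕ → ℚ) e2
  have q3 : ((s+c+2).choose (s+2) : ℚ) * (s+2) = ((s+c+2) : ℚ) * ((s+c+1).choose (s+1) : ℚ) := by
    exact_mod_cast congrArg (Nat.cast : ℕ → ℚ) e3
  have q4 : ((s+c+2).choose (s+1) : ℚ) * (s+1) = ((s+c+2) : ℚ) * ((s+c+1).choose s : ℚ) := by
    exact_mod_cast congrArg (Nat.cast : ℕ → ℚ) e4
  have hs2 : ((s:ℚ)+2) ≠ 0 := by positivity
  have hs1 : ((s:ℚ)+1) ≠ 0 := by positivity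
  have hc1 : ((c:ℚ)+1) ≠ 0 := by positivity
  set q : ℚ := ((s+c+1).choose (s+1) : ℚ) with hq
  have hA : ((s+c+1).choose (s+2) : ℚ) = q * c / (s+2) := by
    field_simp
    linarith [q1]
  have hD : ((s+c+1).choose s : ℚ) = q * (s+1) / (c+1) := by
    field_simp
    linarith [q2]
  have hE : ((s+c+2).choose (s+2) : ℚ) = (s+c+2) * q / (s+2) := by
    field_simp
    linarith [q3]
  have hF : ((s+c+2).choose (s+1) : ℚ) = (s+c+2) * (q * (s+1) / (c+1)) / (s+1) := by
    rw [← hD]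
    field_simp
    linarith [q4]
  rw [hA, hD, hE, hF]
  field_simp
  ring

lemma coeff (n m : ℕ) (hm : m ≤ n) :
    (((n+1).choose (m+1) : ℚ) * ((n+1).choose m : ℚ)) / ((n:ℚ)+1)
      = ∑ j ∈ range (m+1), ((n.choose (2*j) * ((n - 2*j).choose (m - j) * catalan j) : ℕ) : ℚ) := by
  have hsplitq : ∀ j : ℕ, (catalan j : ℚ) = ((2*j).choose j : ℚ) - ((2*j).choose (j+1) : ℚ) := by
    intro j
    have h := congrArg (fun t : ℕ => (t : ℚ)) (catsplit j)
    push_cast at h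
    linarith
  have hsum : ∑ j ∈ range (m+1), ((n.choose (2*j) * ((n - 2*j).choose (m - j) * catalan j) : ℕ) : ℚ)
      = ((∑ j ∈ range (m+1), n.choose (2*j) * (2*j).choose j * (n - 2*j).choose (m - j) : ℕ) : ℚ)
        - ((∑ j ∈ range (m+1), n.choose (2*j) * (2*j).choose (j+1) * (n - 2*j).choose (m - j) : ℕ) : ℚ) := by
    push_cast
    rw [← Finset.sum_sub_distrib]
    apply Finset.sum_congr rfl
    intro j hj
    rw [hsplitq j]
    ring
  rw [hsum]
  match m, hm with
  | 0, _ =>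
    simp [Nat.choose_one_right]
    field_simp
    exact Nat.cast_add_one_ne_zero n
  | (s+1), hm =>
    obtain ⟨c, rfl⟩ : ∃ c, n = s + 1 + c := ⟨n - (s+1), by omega⟩
    rw [sumA (s+1+c) (s+1) (by omega)]
    have hB := sumB (s+1+c) s (by omega)
    rw [hB]
    have hq := final_q s c
    rw [show s+1+c+1 = s+c+2 by ring, show s+1+1 = s+2 by ring, show s+1+c = s+c+1 by ring] at *
    rw [hq]
    push_cast
    have : ((s:ℚ)+c+2) ≠ 0 := by positivity
    field_simp
    ring

lemma tri (n : ℕ) (g : ℕ → ℕ → ℚ)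
    (hg0 : ∀ j i, n < j + i → g j i = 0) :
    ∑ j ∈ Finset.range (n+1), ∑ i ∈ Finset.range (n+1), g j i
      = ∑ m ∈ Finset.range (n+1), ∑ j ∈ Finset.range (m+1), g j (m - j) := by
  rw [← Finset.sum_product', Finset.sum_sigma']
  rw [← Finset.sum_filter_of_ne
    (p := fun p : ℕ × ℕ => p.1 + p.2 ≤ n)
    (by
      intro p hp hne
      by_contra hc
      exact hne (hg0 p.1 p.2 (by omega)))]
  apply Finset.sum_bij' (i := fun p _ => (⟨p.1 + p.2, p.1⟩ : Σ _ : ℕ, ℕ))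
    (j := fun q _ => ((q.2, q.1 - q.2) : ℕ × ℕ))
  · intro p hp
    simp only [Finset.mem_filter, Finset.mem_product, Finset.mem_range] at hp
    simp only [Finset.mem_sigma, Finset.mem_range]
    omega
  · intro q hq
    simp only [Finset.mem_sigma, Finset.mem_range] at hq
    simp only [Finset.mem_filter, Finset.mem_product, Finset.mem_range]
    omega
  · intro p hp
    simp only [Finset.mem_filter, Finset.mem_product, Finset.mem_range] at hp
    simp only [Nat.add_sub_cancel_left]
  · intro q hq
    obtain ⟨m, j⟩ := q
    simp only [Finset.mem_sigma, Finset.mem_range] at hq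
    simp only [Sigma.mk.inj_iff, heq_eq_eq]
    exact ⟨by omega, trivial⟩
  · intro p hp
    simp only [Nat.add_sub_cancel_left]

/-- Lin–Kim: N_{n+1}(x) = ∑_{k=0}^{n} C(n,k) M_k(x;x). -/
theorem narayana_eq_sum_motzkinPoly (n : ℕ) (x : ℚ) :
    ∑ k ∈ Finset.Icc 1 (n + 1),
        (((n + 1).choose k * (n + 1).choose (k - 1) : ℚ) / (n + 1)) * x ^ k
      = ∑ k ∈ Finset.range (n + 1), (n.choose k : ℚ) * motzkinPoly k x x := by
  classical
  have hmap : Finset.Icc 1 (n+1)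
      = (Finset.range (n+1)).map ⟨fun m => m + 1, add_left_injective 1⟩ := by
    ext k
    simp only [Finset.mem_Icc, Finset.mem_map, Finset.mem_range, Function.Embedding.coeFn_mk]
    constructor
    · rintro ⟨h1, h2⟩; exact ⟨k - 1, by omega, by omega⟩
    · rintro ⟨m, hm, rfl⟩; omega
  rw [hmap, Finset.sum_map]
  simp only [Function.Embedding.coeFn_mk, Nat.add_sub_cancel]
  have R1 : ∀ k ∈ Finset.range (n+1), (n.choose k : ℚ) * motzkinPoly k x x
      = ∑ j ∈ Finset.range (n+1),
          ((n.choose k * (k.choose (2*j) * catalan j) : ℕ) : ℚ) * x ^ (k - j + 1) := by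
    intro k hk
    rw [Finset.mem_range] at hk
    rw [motzkinPoly, Finset.mul_sum]
    rw [← Finset.sum_subset (by
        intro j hj
        rw [Finset.mem_range] at hj ⊢
        omega : Finset.range (k/2+1) ⊆ Finset.range (n+1))
      (by
        intro j hj hj2
        rw [Finset.mem_range] at hj hj2
        have h2j : k < 2*j := by omega
        rw [Nat.choose_eq_zero_of_lt h2j]
        push_cast
        ring)]
    apply Finset.sum_congr rfl
    intro j hj
    rw [Finset.mem_range] at hj
    have h2j : 2*j ≤ k := by omega
    have hexp : k - j + 1 = (j + 1) + (k - 2*j) := by omega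
    rw [hexp, pow_add]
    push_cast
    ring
  rw [Finset.sum_congr rfl R1, Finset.sum_comm]
  have R2 : ∀ j ∈ Finset.range (n+1),
      ∑ k ∈ Finset.range (n+1),
          ((n.choose k * (k.choose (2*j) * catalan j) : ℕ) : ℚ) * x ^ (k - j + 1)
        = ∑ i ∈ Finset.range (n+1),
          ((n.choose (2*j) * ((n - 2*j).choose i * catalan j) : ℕ) : ℚ) * x ^ (i + j + 1) := by
    intro j hj
    rw [Finset.sum_subset (by
        intro k hk
        rw [Finset.mem_range] at hk ⊢
        omega : Finset.range (n+1) ⊆ Finset.range (2*j + (n+1)))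
      (by
        intro k hk hk2
        rw [Finset.mem_range] at hk hk2
        rw [Nat.choose_eq_zero_of_lt (show n < k by omega)]
        push_cast
        ring)]
    rw [Finset.range_add, Finset.sum_union (by
        rw [Finset.disjoint_left]
        intro a ha hb
        rw [Finset.mem_range] at ha
        rw [Finset.mem_map] at hb
        obtain ⟨b, hb1, hb2⟩ := hb
        simp only [addLeftEmbedding_apply] at hb2
        omega)]
    rw [Finset.sum_map]
    have hz : ∑ k ∈ Finset.range (2*j),
        ((n.choose k * (k.choose (2*j) * catalan j) : ℕ) : ℚ) * x ^ (k - j + 1) = 0 := by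
      apply Finset.sum_eq_zero
      intro k hk
      rw [Finset.mem_range] at hk
      rw [Nat.choose_eq_zero_of_lt hk]
      push_cast
      ring
    rw [hz, zero_add]
    apply Finset.sum_congr rfl
    intro i hi
    simp only [addLeftEmbedding_apply]
    have hc : n.choose (2*j + i) * ((2*j + i).choose (2*j) * catalan j)
        = n.choose (2*j) * ((n - 2*j).choose i * catalan j) := by
      have := cmc n (2*j) i
      calc n.choose (2*j + i) * ((2*j + i).choose (2*j) * catalan j)
          = n.choose (2*j + i) * (2*j + i).choose (2*j) * catalan j := by ring
        _ = n.choose (2*j) * (n - 2*j).choose i * catalan j := by rw [this]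
        _ = n.choose (2*j) * ((n - 2*j).choose i * catalan j) := by ring
    rw [hc, show 2*j + i - j + 1 = i + j + 1 by omega]
  rw [Finset.sum_congr rfl R2]
  rw [tri n (fun j i => ((n.choose (2*j) * ((n - 2*j).choose i * catalan j) : ℕ) : ℚ) * x ^ (i + j + 1))
    (by
      intro j i h
      show ((n.choose (2*j) * ((n - 2*j).choose i * catalan j) : ℕ) : ℚ) * x ^ (i + j + 1) = 0
      by_cases h2 : 2*j ≤ n
      · rw [Nat.choose_eq_zero_of_lt (show n - 2*j < i by omega)]
        push_cast
        ring
      · rw [Nat.choose_eq_zero_of_lt (show n < 2*j by omega)]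
        push_cast
        ring)]
  apply Finset.sum_congr rfl
  intro m hm
  rw [Finset.mem_range] at hm
  have h1 : ∀ j ∈ Finset.range (m+1),
      ((n.choose (2*j) * ((n - 2*j).choose (m - j) * catalan j) : ℕ) : ℚ) * x ^ ((m - j) + j + 1)
        = ((n.choose (2*j) * ((n - 2*j).choose (m - j) * catalan j) : ℕ) : ℚ) * x ^ (m + 1) := by
    intro j hj
    rw [Finset.mem_range] at hj
    rw [show m - j + j + 1 = m + 1 by omega]
  rw [Finset.sum_congr rfl h1, ← Finset.sum_mul, ← coeff n m (by omega)]
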